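/- If one randomly samples k constraints from a d-dimensional linear program with n constraints and computes the optimum of the subprogram consisting only of the sampled constraints, then the expected number of the remaining n−k constraints violated by this optimum is at most d(n−k)/(k+1). -/

import Mathlib

open scoped Classical

/-- **Clarkson's sampling lemma.**  Consider a `d`-dimensional linear program whose
constraints are indexed by a finite set `C` of cardinality `n`, with a generic
objective so that for each subset `S` of constraints the optimum `opt S` is unique
and is determined by a base `base S ⊆ S` of at most `d` constraints; in particular a
constraint `i ∉ S` is violated by `opt S` only if `i` belongs to the base of
`S ∪ {i}`.  If one samples `k` constraints uniformly at random and computes the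
optimum of the sampled subprogram, then the expected number of the remaining
`n − k` constraints violated by this optimum is at most `d(n−k)/(k+1)`; stated
without division: `(k+1) · ∑_S #violated ≤ d(n−k) · #samples`. -/
theorem clarkson_sampling {ι : Type*} [DecidableEq ι] (d n k : ℕ)
    (C : Finset ι) (hn : C.card = n) (hk : k ≤ n)
    (opt : Finset ι → (Fin d → ℝ))
    (Violates : (Fin d → ℝ) → ι → Prop)
    (base : Finset ι → Finset ι)
    (hbase_sub : ∀ S ⊆ C, base S ⊆ S)
    (hbase_card : ∀ S ⊆ C, (base S).card ≤ d)
    (hbase_opt : ∀ S ⊆ C, opt (base S) = opt S)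
    (hbase_viol : ∀ S ⊆ C, ∀ i ∈ C, i ∉ S →
      Violates (opt S) i → i ∈ base (insert i S)) :
    (k + 1) *
        ∑ S ∈ C.powersetCard k, ((C \ S).filter fun i => Violates (opt S) i).card ≤
      d * (n - k) * (C.powersetCard k).card := by
  classical
  set A := (C.powersetCard k).sigma
      (fun S => (C \ S).filter fun i => Violates (opt S) i) with hA
  set B := (C.powersetCard (k+1)).sigma (fun T => base T) with hB
  have hcard : ∑ S ∈ C.powersetCard k,
      ((C \ S).filter fun i => Violates (opt S) i).card = A.card :=
    (Finset.card_sigma _ _).symm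
  have hAB : A.card ≤ B.card := by
    apply Finset.card_le_card_of_injOn (fun p => ⟨insert p.2 p.1, p.2⟩)
    · rintro ⟨S, i⟩ hp
      have hp : (⟨S, i⟩ : Σ _ : Finset ι, ι) ∈ A := hp
      simp only [hA, Finset.mem_sigma, Finset.mem_filter, Finset.mem_sdiff,
        Finset.mem_powersetCard] at hp
      obtain ⟨⟨hSC, hScard⟩, ⟨hiC, hiS⟩, hviol⟩ := hp
      simp only [hB, Finset.mem_coe, Finset.mem_sigma, Finset.mem_powersetCard]
      refine ⟨⟨Finset.insert_subset hiC hSC, ?_⟩, hbase_viol S hSC i hiC hiS hviol⟩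
      rw [Finset.card_insert_of_notMem hiS, hScard]
    · rintro ⟨S, i⟩ hp ⟨S', i'⟩ hp' h
      simp only [hA, Finset.mem_coe, Finset.mem_sigma, Finset.mem_filter,
        Finset.mem_sdiff, Finset.mem_powersetCard] at hp hp'
      obtain ⟨-, ⟨-, hiS⟩, -⟩ := hp
      obtain ⟨-, ⟨-, hiS'⟩, -⟩ := hp'
      simp only [Sigma.mk.inj_iff, heq_eq_eq] at h ⊢
      obtain ⟨h1, h2⟩ := h
      subst h2
      refine ⟨?_, rfl⟩
      have := congrArg (fun t => Finset.erase t i) h1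
      simpa [Finset.erase_insert hiS, Finset.erase_insert hiS'] using this
  have hBcard : B.card ≤ d * n.choose (k+1) := by
    rw [hB, Finset.card_sigma]
    calc ∑ T ∈ C.powersetCard (k+1), (base T).card
        ≤ ∑ _T ∈ C.powersetCard (k+1), d := by
          apply Finset.sum_le_sum
          intro T hT
          exact hbase_card T (Finset.mem_powersetCard.mp hT).1
      _ = d * n.choose (k+1) := by
          rw [Finset.sum_const, smul_eq_mul, Finset.card_powersetCard, hn, mul_comm]
  rw [hcard, Finset.card_powersetCard, hn]
  calc (k+1) * A.card ≤ (k+1) * (d * n.choose (k+1)) :=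
        Nat.mul_le_mul_left _ (le_trans hAB hBcard)
    _ = d * (n.choose (k+1) * (k+1)) := by ring
    _ = d * (n.choose k * (n-k)) := by rw [Nat.choose_succ_right_eq]
    _ = d * (n-k) * n.choose k := by ring
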